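/- Let M ∈ ℝ^{n×n} be skew-symmetric and A = I − M. Then the symmetric part of A equals the identity: (A + Aᵀ)/2 = I, the symmetric part of A^{-1} equals (I + MMᵀ)^{-1}: (A^{-1} + A^{-T})/2 = (I + MMᵀ)^{-1}, and the smallest eigenvalue of (A^{-1} + A^{-T})/2 is 1/(1 + (m*)²) where m* is the spectral radius of M. -/

import Mathlib

open Matrix

section Stmt17Aux

variable {n : ℕ}

lemma stmt17_eig_iff_spec {K : Type*} [Field K] (B : Matrix (Fin n) (Fin n) K) (μ : K) :
    Module.End.HasEigenvalue (Matrix.toLin' B) μ ↔ μ ∈ spectrum K B := by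
  have h : Matrix.toLin' B = Matrix.toLinAlgEquiv' B := rfl
  rw [h, Module.End.hasEigenvalue_iff_mem_spectrum, AlgEquiv.spectrum_eq]

lemma stmt17_spec_iff_det {K : Type*} [Field K] (B : Matrix (Fin n) (Fin n) K) (μ : K) :
    μ ∈ spectrum K B ↔ (μ • (1 : Matrix (Fin n) (Fin n) K) - B).det = 0 := by
  rw [spectrum.mem_iff]
  have halg : algebraMap K (Matrix (Fin n) (Fin n) K) μ = μ • 1 := by
    rw [Matrix.algebraMap_eq_diagonal]
    ext i j
    simp [Matrix.diagonal, Matrix.one_apply]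
  rw [halg, Matrix.isUnit_iff_isUnit_det, isUnit_iff_ne_zero, not_ne_iff]

lemma stmt17_det_inv_shift {K : Type*} [Field K] (B : Matrix (Fin n) (Fin n) K)
    (hB : IsUnit B.det) {μ : K} (hμ : μ ≠ 0)
    (h : (μ • (1 : Matrix (Fin n) (Fin n) K) - B).det = 0) :
    (μ⁻¹ • (1 : Matrix (Fin n) (Fin n) K) - B⁻¹).det = 0 := by
  have key : μ⁻¹ • (1 : Matrix (Fin n) (Fin n) K) - B⁻¹
      = (-μ⁻¹) • (B⁻¹ * (μ • (1 : Matrix (Fin n) (Fin n) K) - B)) := by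
    rw [Matrix.mul_sub, Matrix.mul_smul, Matrix.mul_one, Matrix.nonsing_inv_mul _ hB,
      smul_sub, smul_smul, neg_mul, inv_mul_cancel₀ hμ]
    simp [sub_eq_add_neg, add_comm]
  rw [key, Matrix.det_smul, Matrix.det_mul, h, mul_zero, mul_zero]

lemma stmt17_det_complexify (B : Matrix (Fin n) (Fin n) ℝ) (x : ℝ) :
    ((x : ℂ) • (1 : Matrix (Fin n) (Fin n) ℂ) - B.map Complex.ofReal).det
      = (((x • (1 : Matrix (Fin n) (Fin n) ℝ) - B).det : ℝ) : ℂ) := by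
  rw [show ((x • (1 : Matrix (Fin n) (Fin n) ℝ) - B).det : ℂ)
      = Complex.ofRealHom ((x • (1 : Matrix (Fin n) (Fin n) ℝ) - B).det) from rfl,
    RingHom.map_det]
  congr 1
  ext i j
  simp [Matrix.map_apply, Matrix.one_apply, Matrix.sub_apply, Matrix.smul_apply,
    apply_ite Complex.ofReal, RingHom.mapMatrix_apply]

lemma stmt17_sq_factor {K : Type*} [CommRing K] (X : Matrix (Fin n) (Fin n) K) (a : K) :
    (a • 1 - X) * (a • 1 + X) = (a ^ 2) • (1 : Matrix (Fin n) (Fin n) K) - X * X := by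
  have h1 : (a • (1 : Matrix (Fin n) (Fin n) K)) * X = X * (a • 1) := by
    rw [Matrix.smul_mul, Matrix.mul_smul, Matrix.one_mul, Matrix.mul_one]
  have h2 : (a • (1 : Matrix (Fin n) (Fin n) K)) * (a • 1) = (a ^ 2) • 1 := by
    rw [Matrix.smul_mul, Matrix.mul_smul, Matrix.one_mul, smul_smul, sq]
  rw [Matrix.sub_mul, Matrix.mul_add, Matrix.mul_add, h2, h1]
  abel

end Stmt17Aux

theorem stmt17 {n : ℕ} (M : Matrix (Fin n) (Fin n) ℝ) (hM : Mᵀ = -M)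
    (A : Matrix (Fin n) (Fin n) ℝ) (hA : A = 1 - M) (hAinv : IsUnit A.det)
    (mstar : ℝ)
    (hstar_bound : ∀ μ : ℂ,
      Module.End.HasEigenvalue (Matrix.toLin' (M.map (Complex.ofReal))) μ →
        ‖μ‖ ≤ mstar)
    (hstar_mem : ∃ μ : ℂ,
      Module.End.HasEigenvalue (Matrix.toLin' (M.map (Complex.ofReal))) μ ∧
        ‖μ‖ = mstar) :
    (2⁻¹ : ℝ) • (A + Aᵀ) = 1 ∧
    (2⁻¹ : ℝ) • (A⁻¹ + (A⁻¹)ᵀ) = (1 + M * Mᵀ)⁻¹ ∧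
    (∀ μ : ℝ,
      Module.End.HasEigenvalue (Matrix.toLin' ((2⁻¹ : ℝ) • (A⁻¹ + (A⁻¹)ᵀ))) μ →
        1 / (1 + mstar ^ 2) ≤ μ) ∧
    Module.End.HasEigenvalue (Matrix.toLin' ((2⁻¹ : ℝ) • (A⁻¹ + (A⁻¹)ᵀ)))
      (1 / (1 + mstar ^ 2)) := by
  set Mc : Matrix (Fin n) (Fin n) ℂ := M.map Complex.ofReal with hMc
  have hAT : Aᵀ = 1 + M := by
    rw [hA, Matrix.transpose_sub, Matrix.transpose_one, hM, sub_neg_eq_add]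
  have hATdet : IsUnit Aᵀ.det := by rwa [Matrix.det_transpose]
  have h2 : A + Aᵀ = (2 : ℝ) • (1 : Matrix (Fin n) (Fin n) ℝ) := by
    rw [two_smul, hAT, hA]; abel
  have part1 : (2⁻¹ : ℝ) • (A + Aᵀ) = 1 := by
    rw [h2, smul_smul]; norm_num
  have hNR : M * Mᵀ = -(M * M) := by rw [hM, Matrix.mul_neg]
  have hS : A * Aᵀ = 1 + M * Mᵀ := by
    rw [hNR, hAT, hA]
    noncomm_ring
  have hdet1N : IsUnit (1 + M * Mᵀ).det := by
    rw [← hS, Matrix.det_mul]; exact hAinv.mul hATdet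
  have part2 : (2⁻¹ : ℝ) • (A⁻¹ + (A⁻¹)ᵀ) = (1 + M * Mᵀ)⁻¹ := by
    have hsum : A⁻¹ + (Aᵀ)⁻¹ = (Aᵀ)⁻¹ * (A + Aᵀ) * A⁻¹ := by
      rw [Matrix.mul_add, Matrix.add_mul, Matrix.nonsing_inv_mul _ hATdet, Matrix.one_mul,
        Matrix.mul_assoc, Matrix.mul_nonsing_inv _ hAinv, Matrix.mul_one, add_comm]
    rw [Matrix.transpose_nonsing_inv, hsum, h2, Matrix.mul_smul, Matrix.smul_mul, smul_smul]
    norm_num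
    rw [← Matrix.mul_inv_rev, hS]
  have hinvdet : IsUnit ((1 + M * Mᵀ)⁻¹).det :=
    IsUnit.of_mul_eq_one _
      (by rw [← Matrix.det_mul, Matrix.nonsing_inv_mul _ hdet1N, Matrix.det_one])
  -- key bound: any real eigenvalue λ of M * Mᵀ satisfies 0 ≤ λ ≤ mstar ^ 2
  have key : ∀ l : ℝ, (l • (1 : Matrix (Fin n) (Fin n) ℝ) - M * Mᵀ).det = 0 →
      0 ≤ l ∧ l ≤ mstar ^ 2 := by
    intro l hl
    have hl0 : 0 ≤ l := by
      have heig : Module.End.HasEigenvalue (Matrix.toLin' (M * Mᵀ)) l := by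
        rw [stmt17_eig_iff_spec, stmt17_spec_iff_det]; exact hl
      obtain ⟨v, hv⟩ := heig.exists_hasEigenvector
      have hvec : (M * Mᵀ) *ᵥ v = l • v := by
        rw [← Matrix.toLin'_apply]; exact hv.apply_eq_smul
      have hdot : v ⬝ᵥ ((M * Mᵀ) *ᵥ v) = l * (v ⬝ᵥ v) := by
        rw [hvec, dotProduct_smul, smul_eq_mul]
      have hdot2 : v ⬝ᵥ ((M * Mᵀ) *ᵥ v) = (Mᵀ *ᵥ v) ⬝ᵥ (Mᵀ *ᵥ v) := by
        rw [← Matrix.mulVec_mulVec, Matrix.dotProduct_mulVec, ← Matrix.mulVec_transpose]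
      have hw : 0 ≤ (Mᵀ *ᵥ v) ⬝ᵥ (Mᵀ *ᵥ v) :=
        Finset.sum_nonneg fun i _ => mul_self_nonneg _
      have hvv : 0 < v ⬝ᵥ v := by
        rcases lt_or_eq_of_le (Finset.sum_nonneg fun i (_ : i ∈ Finset.univ) =>
          mul_self_nonneg (v i)) with h | h
        · exact h
        · exact absurd (dotProduct_self_eq_zero.mp h.symm) hv.right
      nlinarith [hdot.symm.trans hdot2]
    -- complexify
    have hlC : ((l : ℂ) • (1 : Matrix (Fin n) (Fin n) ℂ) - (M * Mᵀ).map Complex.ofReal).det = 0 := by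
      rw [stmt17_det_complexify, hl, Complex.ofReal_zero]
    have hmapmul : (M * Mᵀ).map Complex.ofReal = -(Mc * Mc) := by
      rw [hNR]
      ext i j
      simp [Matrix.map_apply, Matrix.mul_apply, Matrix.neg_apply, hMc]
    set s := Real.sqrt l with hs
    set z : ℂ := (s : ℂ) * Complex.I with hz
    have hz2 : z ^ 2 = -(l : ℂ) := by
      rw [hz, mul_pow, Complex.I_sq, ← Complex.ofReal_pow, Real.sq_sqrt hl0]
      ring
    have hdet0 : ((z • 1 - Mc) * (z • 1 + Mc)).det = 0 := by
      rw [stmt17_sq_factor, hz2]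
      have heq : (-(l : ℂ)) • (1 : Matrix (Fin n) (Fin n) ℂ) - Mc * Mc
          = -((l : ℂ) • 1 - (M * Mᵀ).map Complex.ofReal) := by
        rw [hmapmul, neg_smul, sub_neg_eq_add]
        abel
      rw [heq, Matrix.det_neg, hlC, mul_zero]
    rw [Matrix.det_mul, mul_eq_zero] at hdet0
    have habs : ‖z‖ = s := by
      rw [hz, norm_mul, Complex.norm_I, Complex.norm_real, Real.norm_eq_abs, mul_one,
        abs_of_nonneg (Real.sqrt_nonneg l)]
    have hsle : s ≤ mstar := by
      rcases hdet0 with h | h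
      · have : Module.End.HasEigenvalue (Matrix.toLin' Mc) z := by
          rw [stmt17_eig_iff_spec, stmt17_spec_iff_det]
          exact h
        have := hstar_bound _ this
        rwa [habs] at this
      · have : Module.End.HasEigenvalue (Matrix.toLin' Mc) (-z) := by
          rw [stmt17_eig_iff_spec, stmt17_spec_iff_det]
          have heq2 : (-z) • (1 : Matrix (Fin n) (Fin n) ℂ) - Mc = -(z • 1 + Mc) := by
            rw [neg_smul, neg_add]
            abel
          rw [heq2, Matrix.det_neg, h, mul_zero]
        have := hstar_bound _ this
        rwa [norm_neg, habs] at this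
    constructor
    · exact hl0
    · calc l = s ^ 2 := (Real.sq_sqrt hl0).symm
        _ ≤ mstar ^ 2 := pow_le_pow_left₀ (Real.sqrt_nonneg l) hsle 2
  -- part 3
  have part3 : ∀ μ : ℝ,
      Module.End.HasEigenvalue (Matrix.toLin' ((2⁻¹ : ℝ) • (A⁻¹ + (A⁻¹)ᵀ))) μ →
        1 / (1 + mstar ^ 2) ≤ μ := by
    intro μ hμ
    rw [part2, stmt17_eig_iff_spec, stmt17_spec_iff_det] at hμ
    have hμ0 : μ ≠ 0 := by
      intro h
      rw [h, zero_smul, zero_sub, Matrix.det_neg] at hμ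
      rcases mul_eq_zero.mp hμ with h' | h'
      · exact (pow_ne_zero _ (by norm_num : (-1 : ℝ) ≠ 0)) h'
      · exact hinvdet.ne_zero h'
    have hshift := stmt17_det_inv_shift _ hinvdet hμ0 hμ
    rw [Matrix.nonsing_inv_nonsing_inv _ hdet1N] at hshift
    have hldet : ((μ⁻¹ - 1) • (1 : Matrix (Fin n) (Fin n) ℝ) - M * Mᵀ).det = 0 := by
      rw [sub_smul, one_smul, sub_sub]; exact hshift
    obtain ⟨hl0, hlle⟩ := key _ hldet
    have hinv : μ⁻¹ = 1 + (μ⁻¹ - 1) := by ring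
    have hμinvpos : 0 < μ⁻¹ := by rw [hinv]; linarith
    have hμpos : 0 < μ := inv_pos.mp hμinvpos
    have hle : μ⁻¹ ≤ 1 + mstar ^ 2 := by rw [hinv]; linarith
    rw [div_le_iff₀ (by nlinarith [sq_nonneg mstar] : (0:ℝ) < 1 + mstar ^ 2)]
    calc (1 : ℝ) = μ * μ⁻¹ := (mul_inv_cancel₀ hμ0).symm
      _ ≤ μ * (1 + mstar ^ 2) := by
          exact mul_le_mul_of_nonneg_left hle (le_of_lt hμpos)
  refine ⟨part1, part2, part3, ?_⟩
  -- part 4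
  obtain ⟨μ0, hμ0eig, hμ0abs⟩ := hstar_mem
  obtain ⟨v, hv⟩ := hμ0eig.exists_hasEigenvector
  have hvec : Mc *ᵥ v = μ0 • v := by
    rw [← Matrix.toLin'_apply]; exact hv.apply_eq_smul
  have hsval : star v ⬝ᵥ v = ((∑ i, Complex.normSq (v i) : ℝ) : ℂ) := by
    rw [dotProduct]
    push_cast
    refine Finset.sum_congr rfl fun i _ => ?_
    rw [Pi.star_apply]
    rw [show (star (v i) : ℂ) = (starRingEnd ℂ) (v i) from rfl]
    rw [mul_comm, Complex.mul_conj]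
  have hsumpos : 0 < ∑ i, Complex.normSq (v i) := by
    obtain ⟨i0, hi0⟩ := Function.ne_iff.mp hv.right
    exact Finset.sum_pos' (fun i _ => Complex.normSq_nonneg _)
      ⟨i0, Finset.mem_univ _, Complex.normSq_pos.mpr hi0⟩
  have hsne : star v ⬝ᵥ v ≠ 0 := by
    rw [hsval]
    exact_mod_cast ne_of_gt hsumpos
  have hMcH : Mcᴴ = -Mc := by
    ext i j
    have : M j i = -M i j := by
      have := congrFun (congrFun hM i) j
      simp [Matrix.transpose_apply, Matrix.neg_apply] at this
      linarith
    simp [Matrix.conjTranspose_apply, Matrix.map_apply, hMc, Matrix.neg_apply, this]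
  have hp : star v ⬝ᵥ (Mc *ᵥ v) = μ0 * (star v ⬝ᵥ v) := by
    rw [hvec, dotProduct_smul, smul_eq_mul]
  have hstarp : star (star v ⬝ᵥ (Mc *ᵥ v)) = -(star v ⬝ᵥ (Mc *ᵥ v)) := by
    have ha : star (Mc *ᵥ v) ⬝ᵥ v = star (star v ⬝ᵥ (Mc *ᵥ v)) := Matrix.star_dotProduct _ _
    have hb : star (Mc *ᵥ v) ⬝ᵥ v = -(star v ⬝ᵥ (Mc *ᵥ v)) := by
      rw [Matrix.star_mulVec, ← Matrix.dotProduct_mulVec, hMcH, Matrix.neg_mulVec,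
        dotProduct_neg]
    rw [← ha, hb]
  have hsreal : star (star v ⬝ᵥ v) = star v ⬝ᵥ v := by
    conv_lhs => rw [Matrix.star_dotProduct, star_star]
  have hconjμ0 : star μ0 = -μ0 := by
    have h1 : star μ0 * (star v ⬝ᵥ v) = (-μ0) * (star v ⬝ᵥ v) := by
      have h := hstarp
      rw [hp, star_mul', hsreal, ← neg_mul] at h
      exact h
    exact mul_right_cancel₀ hsne h1
  have hμ0sq : μ0 ^ 2 = -(((mstar ^ 2 : ℝ)) : ℂ) := by
    have h1 : ((Complex.normSq μ0 : ℝ) : ℂ) = -μ0 ^ 2 := by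
      rw [← Complex.mul_conj, starRingEnd_apply, hconjμ0]
      ring
    have h2 : (mstar ^ 2 : ℝ) = Complex.normSq μ0 := by
      rw [← hμ0abs, Complex.sq_norm]
    rw [h2, h1, neg_neg]
  have hmstar0 : 0 ≤ mstar := hμ0abs ▸ norm_nonneg μ0
  have hd1 : (μ0 • (1 : Matrix (Fin n) (Fin n) ℂ) - Mc).det = 0 := by
    rw [← stmt17_spec_iff_det, ← stmt17_eig_iff_spec]; exact hμ0eig
  have hd2 : ((μ0 ^ 2) • (1 : Matrix (Fin n) (Fin n) ℂ) - Mc * Mc).det = 0 := by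
    rw [← stmt17_sq_factor, Matrix.det_mul, hd1, zero_mul]
  have hmapmul : (M * Mᵀ).map Complex.ofReal = -(Mc * Mc) := by
    rw [hNR]
    ext i j
    simp [Matrix.map_apply, Matrix.mul_apply, Matrix.neg_apply, hMc]
  have hd3 : (((mstar ^ 2 : ℝ) : ℂ) • (1 : Matrix (Fin n) (Fin n) ℂ)
      - (M * Mᵀ).map Complex.ofReal).det = 0 := by
    have heq : ((mstar ^ 2 : ℝ) : ℂ) • (1 : Matrix (Fin n) (Fin n) ℂ)
        - (M * Mᵀ).map Complex.ofReal
        = -((μ0 ^ 2) • (1 : Matrix (Fin n) (Fin n) ℂ) - Mc * Mc) := by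
      rw [hmapmul, hμ0sq, sub_neg_eq_add, neg_sub, neg_smul, sub_neg_eq_add, add_comm]
    rw [heq, Matrix.det_neg, hd2, mul_zero]
  have hd4 : ((mstar ^ 2) • (1 : Matrix (Fin n) (Fin n) ℝ) - M * Mᵀ).det = 0 := by
    have := hd3
    rw [stmt17_det_complexify] at this
    exact_mod_cast this
  have hd5 : ((1 + mstar ^ 2) • (1 : Matrix (Fin n) (Fin n) ℝ) - (1 + M * Mᵀ)).det = 0 := by
    have heq : (1 + mstar ^ 2) • (1 : Matrix (Fin n) (Fin n) ℝ) - (1 + M * Mᵀ)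
        = (mstar ^ 2) • (1 : Matrix (Fin n) (Fin n) ℝ) - M * Mᵀ := by
      rw [add_smul, one_smul]; abel
    rw [heq]; exact hd4
  have hpos : (0 : ℝ) < 1 + mstar ^ 2 := by nlinarith [sq_nonneg mstar]
  have hd6 := stmt17_det_inv_shift _ hdet1N (ne_of_gt hpos) hd5
  rw [part2, stmt17_eig_iff_spec, stmt17_spec_iff_det, one_div]
  exact hd6
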